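/- Let p be a prime, z a generator of C_{p^{n+1}}, and β ∈ 𝔽_p[C_p], embedded in the semidirect product C_{p^{n+1}} ⋉ 𝔽_p[C_p] where z acts by left translation by a generator of C_p. Then the 'twisted sum' β^{z^{p^n − 1}} · ⋯ · β^{z} · β equals p^{n−1} · ∑_{x∈C_p} (∑_{x'∈C_p} β(x')) x, which is 0 in 𝔽_p[C_p] when n ≥ 2. Consequently (zβ)^{p^n} = z^{p^n} in the semidirect product. -/

import Mathlib

/-- Translation by `c` as a (multiplicative) automorphism of the additive group of
`𝔽_p[C_p]` (functions `C_p → 𝔽_p`), written multiplicatively. -/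
def shiftMulAut (p : ℕ) (c : ZMod p) : MulAut (Multiplicative (ZMod p → ZMod p)) where
  toFun f := Multiplicative.ofAdd fun x => Multiplicative.toAdd f (x - c)
  invFun f := Multiplicative.ofAdd fun x => Multiplicative.toAdd f (x + c)
  left_inv f := by
    show Multiplicative.ofAdd (fun x => Multiplicative.toAdd f (x + c - c)) = f
    simp
  right_inv f := by
    show Multiplicative.ofAdd (fun x => Multiplicative.toAdd f (x - c + c)) = f
    simp
  map_mul' f g := rfl

/-- The left-translation action of `C_{p^{n+1}}` on `𝔽_p[C_p]` (through the quotient `C_p`). -/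
def transAction (p n : ℕ) :
    Multiplicative (ZMod (p ^ (n + 1))) →* MulAut (Multiplicative (ZMod p → ZMod p)) where
  toFun z := shiftMulAut p
    (ZMod.castHom (dvd_pow_self p (Nat.succ_ne_zero n)) (ZMod p) (Multiplicative.toAdd z))
  map_one' := by
    ext f
    simp [shiftMulAut]
  map_mul' z w := by
    ext f
    simp [shiftMulAut, sub_sub,
      ZMod.cast_add (dvd_pow_self p (Nat.succ_ne_zero n))]

section Aux

variable {M : Type*} [AddCommMonoid M]

lemma sum_range_cast (p : ℕ) [NeZero p] (f : ZMod p → M) :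
    ∑ i ∈ Finset.range p, f (i : ZMod p) = ∑ c : ZMod p, f c := by
  refine Finset.sum_bij' (fun i _ => (i : ZMod p)) (fun c _ => c.val) ?_ ?_ ?_ ?_ ?_ <;>
    simp +contextual [ZMod.val_lt, ZMod.val_natCast_of_lt, Finset.mem_range, Nat.mod_eq_of_lt]

lemma sum_range_mul_cast (p : ℕ) [NeZero p] (f : ZMod p → M) (m : ℕ) :
    ∑ j ∈ Finset.range (m * p), f (j : ZMod p) = m • ∑ c : ZMod p, f c := by
  induction m with
  | zero => simp
  | succ m ih =>
    rw [add_mul, one_mul, Finset.sum_range_add, ih, succ_nsmul]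
    congr 1
    rw [← sum_range_cast p f]
    apply Finset.sum_congr rfl
    intro i _
    push_cast
    simp

lemma semidirect_pow (p n : ℕ) (β : ZMod p → ZMod p) (k : ℕ) :
    (⟨Multiplicative.ofAdd β, Multiplicative.ofAdd (1 : ZMod (p ^ (n + 1)))⟩ :
        Multiplicative (ZMod p → ZMod p) ⋊[transAction p n]
          Multiplicative (ZMod (p ^ (n + 1)))) ^ k =
      ⟨Multiplicative.ofAdd (∑ j ∈ Finset.range k, fun x : ZMod p => β (x - (j : ZMod p))),
        Multiplicative.ofAdd (1 : ZMod (p ^ (n + 1))) ^ k⟩ := by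
  induction k with
  | zero => simp
  | succ k ih =>
    rw [pow_succ _ k, ih]
    ext : 1
    · show _ * (transAction p n _ _) = _
      rw [Finset.sum_range_succ]
      congr 1
      show (transAction p n (Multiplicative.ofAdd (1 : ZMod (p ^ (n + 1))) ^ k))
          (Multiplicative.ofAdd β) = _
      simp only [transAction, shiftMulAut, MonoidHom.coe_mk, OneHom.coe_mk, MulEquiv.coe_mk,
        Equiv.coe_fn_mk]
      have : Multiplicative.toAdd (Multiplicative.ofAdd (1 : ZMod (p ^ (n + 1))) ^ k)
          = (k : ZMod (p ^ (n + 1))) := by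
        rw [← ofAdd_nsmul, toAdd_ofAdd, nsmul_eq_mul, mul_one]
      rw [this, map_natCast]
      rfl
    · show _ * _ = _
      rw [pow_succ _ k]

end Aux

/-- The twisted sum `β^{z^{p^n−1}} ⋯ β^z · β` equals
`p^{n−1} • (constant function ∑_{x'} β(x'))`, which vanishes for `n ≥ 2`; consequently
`(zβ)^{p^n} = z^{p^n}` in the semidirect product `C_{p^{n+1}} ⋉ 𝔽_p[C_p]`. -/
theorem twisted_sum_eq_zero (p n : ℕ) [Fact p.Prime] (hn : 2 ≤ n)
    (β : ZMod p → ZMod p) :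
    (∑ j ∈ Finset.range (p ^ n), fun x : ZMod p => β (x - (j : ZMod p))) =
        p ^ (n - 1) • (fun _ : ZMod p => ∑ x : ZMod p, β x) ∧
    (∑ j ∈ Finset.range (p ^ n), fun x : ZMod p => β (x - (j : ZMod p))) = 0 ∧
    (⟨Multiplicative.ofAdd β, Multiplicative.ofAdd (1 : ZMod (p ^ (n + 1)))⟩ :
        Multiplicative (ZMod p → ZMod p) ⋊[transAction p n]
          Multiplicative (ZMod (p ^ (n + 1)))) ^ (p ^ n) =
      ⟨1, Multiplicative.ofAdd (1 : ZMod (p ^ (n + 1))) ^ (p ^ n)⟩ := by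
  have hp : p ≠ 0 := (Fact.out (p := p.Prime)).ne_zero
  haveI : NeZero p := ⟨hp⟩
  have key : (∑ j ∈ Finset.range (p ^ n), fun x : ZMod p => β (x - (j : ZMod p))) =
      p ^ (n - 1) • (fun _ : ZMod p => ∑ x : ZMod p, β x) := by
    have hpn : p ^ n = p ^ (n - 1) * p := by
      rw [← pow_succ, Nat.sub_add_cancel (le_trans one_le_two hn)]
    rw [hpn, sum_range_mul_cast p (fun c => fun x : ZMod p => β (x - c)) (p ^ (n - 1))]
    congr 1
    funext x
    rw [Finset.sum_apply]
    exact Fintype.sum_equiv (Equiv.subLeft x) (fun c => β (x - c)) β (fun c => rfl)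
  have keyz : (∑ j ∈ Finset.range (p ^ n), fun x : ZMod p => β (x - (j : ZMod p))) = 0 := by
    rw [key]
    have : p ^ (n - 1) = p ^ (n - 2) * p := by
      rw [← pow_succ]
      congr 1
      omega
    rw [this, mul_smul]
    funext x
    simp [Pi.smul_apply, nsmul_eq_mul, ZMod.natCast_self]
  refine ⟨key, keyz, ?_⟩
  rw [semidirect_pow]
  rw [keyz]
  rfl
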